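/- Fix N ≥ 2 and β ∈ ℝ, take β′ = β in the two-bath adjoint Lindblad generator L*, and set H^{(S)} := Σ_{k=1}^N σz^{(k)}, Z := Tr(exp(−βH^{(S)})). Let ρ be a positive definite Hermitian 2^N×2^N matrix of trace 1, let (Ψ_j) be an orthonormal basis of ℂ^{2^N} with ρΨ_j = ρ_jΨ_j and ρ_j > 0 for all j, and define log ρ := Σ_j (ln ρ_j)|Ψ_j⟩⟨Ψ_j| and log ρ^β := −βH^{(S)} − (ln Z)·I. Then the entropy production σ(ρ) := Tr( L*(ρ)·(log ρ^β − log ρ) ) satisfies σ(ρ) = 4β₀ · Σ_{j,k} ( |⟨Ψ_k, σ₊^{(1)}Ψ_j⟩|² + |⟨Ψ_k, σ₊^{(N)}Ψ_j⟩|² ) · (e^{2β}ρ_k − ρ_j) · (ln ρ_k − ln ρ_j + 2β). -/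

import Mathlib

open Matrix Complex Filter
open scoped Kronecker Topology ComplexOrder

noncomputable section

/-- The `N`-spin configuration space index: `(ℂ²)^{⊗N}` is identified with
functions `Fin N → Fin 2 → ℂ`, so `2^N × 2^N` matrices are indexed by `Fin N → Fin 2`. -/
abbrev Spin (N : ℕ) := Fin N → Fin 2

def sx : Matrix (Fin 2) (Fin 2) ℂ := !![0, 1; 1, 0]
def sy : Matrix (Fin 2) (Fin 2) ℂ := !![0, -Complex.I; Complex.I, 0]
def sz : Matrix (Fin 2) (Fin 2) ℂ := !![1, 0; 0, -1]
def sp : Matrix (Fin 2) (Fin 2) ℂ := !![0, 1; 0, 0]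
def sm : Matrix (Fin 2) (Fin 2) ℂ := !![0, 0; 1, 0]
def np : Matrix (Fin 2) (Fin 2) ℂ := !![1, 0; 0, 0]
def nm : Matrix (Fin 2) (Fin 2) ℂ := !![0, 0; 0, 1]

/-- `M^{(k)} = I ⊗ ... ⊗ M ⊗ ... ⊗ I`: the 2×2 matrix `M` acting at site `k`
of the chain, under the iterated Kronecker identification. -/
def site {N : ℕ} (k : Fin N) (M : Matrix (Fin 2) (Fin 2) ℂ) :
    Matrix (Spin N) (Spin N) ℂ :=
  Matrix.of fun x y => ∏ j : Fin N, if j = k then M (x j) (y j) else if x j = y j then 1 else 0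

/-- The XY spin-chain Hamiltonian
`H_S = Σ_{k=1}^N σz^{(k)} + Σ_{k=1}^{N-1} (σx^{(k)}σx^{(k+1)} + σy^{(k)}σy^{(k+1)})`. -/
def HS (N : ℕ) : Matrix (Spin N) (Spin N) ℂ :=
  (∑ k : Fin N, site k sz) +
    ∑ k : Fin N, ∑ l : Fin N,
      if (l : ℕ) = (k : ℕ) + 1 then site k sx * site l sx + site k sy * site l sy else 0

/-- `β₀ = e^{-β}/(e^{-β}+e^{β})`. -/
def b0 (β : ℝ) : ℝ := Real.exp (-β) / (Real.exp (-β) + Real.exp β)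

/-- `β₁ = e^{β}/(e^{-β}+e^{β})`. -/
def b1 (β : ℝ) : ℝ := Real.exp β / (Real.exp (-β) + Real.exp β)

/-- The single-spin Gibbs state `ρ_β = diag(β₀, β₁)`. -/
def rhoB (β : ℝ) : Matrix (Fin 2) (Fin 2) ℂ := !![(b0 β : ℂ), 0; 0, (b1 β : ℂ)]

/-- Heisenberg-picture dissipator at site `k`, inverse temperature `β`:
`2β₀(2σ₋^{(k)}Xσ₊^{(k)} − {n₋^{(k)},X}) + 2β₁(2σ₊^{(k)}Xσ₋^{(k)} − {n₊^{(k)},X})`. -/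
def dissAt {N : ℕ} (k : Fin N) (β : ℝ) (X : Matrix (Spin N) (Spin N) ℂ) :
    Matrix (Spin N) (Spin N) ℂ :=
  (2 * b0 β : ℂ) • (2 • (site k sm * X * site k sp) - (site k nm * X + X * site k nm)) +
    (2 * b1 β : ℂ) • (2 • (site k sp * X * site k sm) - (site k np * X + X * site k np))

/-- Schrödinger-picture (adjoint) dissipator at site `k`:
`2β₀(2σ₊^{(k)}ρσ₋^{(k)} − {n₋^{(k)},ρ}) + 2β₁(2σ₋^{(k)}ρσ₊^{(k)} − {n₊^{(k)},ρ})`. -/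
def dissStarAt {N : ℕ} (k : Fin N) (β : ℝ) (ρ : Matrix (Spin N) (Spin N) ℂ) :
    Matrix (Spin N) (Spin N) ℂ :=
  (2 * b0 β : ℂ) • (2 • (site k sp * ρ * site k sm) - (site k nm * ρ + ρ * site k nm)) +
    (2 * b1 β : ℂ) • (2 • (site k sm * ρ * site k sp) - (site k np * ρ + ρ * site k np))

/-- The two-bath Lindblad generator (Heisenberg picture), baths at sites `k` and `l`. -/
def Ltwo {N : ℕ} (k l : Fin N) (β β' : ℝ) (X : Matrix (Spin N) (Spin N) ℂ) :
    Matrix (Spin N) (Spin N) ℂ :=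
  Complex.I • (HS N * X - X * HS N) + dissAt k β X + dissAt l β' X

/-- The two-bath adjoint Lindblad generator, baths at sites `k` and `l`. -/
def LtwoStar {N : ℕ} (k l : Fin N) (β β' : ℝ) (ρ : Matrix (Spin N) (Spin N) ℂ) :
    Matrix (Spin N) (Spin N) ℂ :=
  (-Complex.I) • (HS N * ρ - ρ * HS N) + dissStarAt k β ρ + dissStarAt l β' ρ

/-- The `N`-fold Kronecker product `ρ_β ⊗ ... ⊗ ρ_β` under the iterated-Kronecker
identification. -/
def prodState (N : ℕ) (β : ℝ) : Matrix (Spin N) (Spin N) ℂ :=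
  Matrix.of fun x y => ∏ j : Fin N, rhoB β (x j) (y j)

/-- A density matrix: Hermitian positive semidefinite with trace 1. -/
def IsDensityMatrix {n : Type*} [Fintype n] [DecidableEq n] (ρ : Matrix n n ℂ) : Prop :=
  ρ.IsHermitian ∧ ρ.PosSemidef ∧ ρ.trace = 1

section AuxLemmas

variable {N : ℕ}

/-! ### 2×2 facts -/

lemma smsp : sm * sp = nm := by
  ext i j; fin_cases i <;> fin_cases j <;> simp [sm, sp, nm, Matrix.mul_apply, Fin.sum_univ_two]
lemma spsm : sp * sm = np := by
  ext i j; fin_cases i <;> fin_cases j <;> simp [sm, sp, np, Matrix.mul_apply, Fin.sum_univ_two]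
lemma szsp : sz * sp - sp * sz = (2:ℂ) • sp := by
  ext i j; fin_cases i <;> fin_cases j <;>
    simp [sm, sp, sz, Matrix.mul_apply, Fin.sum_univ_two] <;> norm_num
lemma szsm : sz * sm - sm * sz = (-2:ℂ) • sm := by
  ext i j; fin_cases i <;> fin_cases j <;>
    simp [sm, sz, Matrix.mul_apply, Fin.sum_univ_two] <;> norm_num
lemma sznm : sz * nm - nm * sz = (0:ℂ) • nm := by
  ext i j; fin_cases i <;> fin_cases j <;> simp [nm, sz, Matrix.mul_apply, Fin.sum_univ_two]
lemma sznp : sz * np - np * sz = (0:ℂ) • np := by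
  ext i j; fin_cases i <;> fin_cases j <;> simp [np, sz, Matrix.mul_apply, Fin.sum_univ_two]
lemma szsx : sz * sx = Complex.I • sy := by
  ext i j; fin_cases i <;> fin_cases j <;> simp [sx, sy, sz, Matrix.mul_apply, Fin.sum_univ_two]
lemma sxsz : sx * sz = (-Complex.I) • sy := by
  ext i j; fin_cases i <;> fin_cases j <;> simp [sx, sy, sz, Matrix.mul_apply, Fin.sum_univ_two]
lemma szsy : sz * sy = (-Complex.I) • sx := by
  ext i j; fin_cases i <;> fin_cases j <;> simp [sx, sy, sz, Matrix.mul_apply, Fin.sum_univ_two]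
lemma sysz : sy * sz = Complex.I • sx := by
  ext i j; fin_cases i <;> fin_cases j <;> simp [sx, sy, sz, Matrix.mul_apply, Fin.sum_univ_two]
lemma sp_entry : ∀ a b : Fin 2, (starRingEnd ℂ) (sp b a) = sm a b := by
  intro a b; fin_cases a <;> fin_cases b <;> simp [sp, sm]

/-! ### `site` algebra -/

lemma site_mul_same (k : Fin N) (A B : Matrix (Fin 2) (Fin 2) ℂ) :
    site k A * site k B = site k (A * B) := by
  ext x y
  simp only [site, Matrix.mul_apply, Matrix.of_apply]
  calc (∑ z : Spin N, (∏ j : Fin N, if j = k then A (x j) (z j) else if x j = z j then 1 else 0) *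
        ∏ j : Fin N, if j = k then B (z j) (y j) else if z j = y j then 1 else 0)
      = ∑ z ∈ Fintype.piFinset (fun _ : Fin N => (Finset.univ : Finset (Fin 2))),
          ∏ j : Fin N, ((if j = k then A (x j) (z j) else if x j = z j then 1 else 0) *
            (if j = k then B (z j) (y j) else if z j = y j then 1 else 0)) := by
        rw [Fintype.piFinset_univ]
        exact Finset.sum_congr rfl fun z _ => (Finset.prod_mul_distrib).symm
    _ = ∏ j : Fin N, ∑ t : Fin 2, ((if j = k then A (x j) t else if x j = t then 1 else 0) *
            (if j = k then B t (y j) else if t = y j then 1 else 0)) := by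
        rw [Finset.prod_univ_sum]
    _ = ∏ j : Fin N, if j = k then (A * B) (x j) (y j) else if x j = y j then 1 else 0 := by
        apply Finset.prod_congr rfl
        intro j _
        by_cases hj : j = k
        · simp [hj, Matrix.mul_apply]
        · simp only [if_neg hj]
          by_cases hxy : x j = y j <;> simp [hxy, Finset.sum_ite_eq', Fin.sum_univ_two]

lemma site_mul_diff (k l : Fin N) (hkl : k ≠ l) (A B : Matrix (Fin 2) (Fin 2) ℂ) :
    site k A * site l B = Matrix.of fun x y => ∏ j : Fin N,
      if j = k then A (x j) (y j) else if j = l then B (x j) (y j)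
      else if x j = y j then 1 else 0 := by
  ext x y
  simp only [site, Matrix.mul_apply, Matrix.of_apply]
  calc (∑ z : Spin N, (∏ j : Fin N, if j = k then A (x j) (z j) else if x j = z j then 1 else 0) *
        ∏ j : Fin N, if j = l then B (z j) (y j) else if z j = y j then 1 else 0)
      = ∑ z ∈ Fintype.piFinset (fun _ : Fin N => (Finset.univ : Finset (Fin 2))),
          ∏ j : Fin N, ((if j = k then A (x j) (z j) else if x j = z j then 1 else 0) *
            (if j = l then B (z j) (y j) else if z j = y j then 1 else 0)) := by
        rw [Fintype.piFinset_univ]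
        exact Finset.sum_congr rfl fun z _ => (Finset.prod_mul_distrib).symm
    _ = ∏ j : Fin N, ∑ t : Fin 2, ((if j = k then A (x j) t else if x j = t then 1 else 0) *
            (if j = l then B t (y j) else if t = y j then 1 else 0)) := by
        rw [Finset.prod_univ_sum]
    _ = _ := by
        apply Finset.prod_congr rfl
        intro j _
        by_cases hjk : j = k
        · subst hjk
          simp [if_neg (by exact fun h => hkl h), hkl, Finset.sum_ite_eq']
        · by_cases hjl : j = l
          · subst hjl
            simp [hjk, Finset.sum_ite_eq]
          · simp only [if_neg hjk, if_neg hjl]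
            by_cases hxy : x j = y j <;> simp [hxy, Finset.sum_ite_eq']

lemma site_comm (k l : Fin N) (hkl : k ≠ l) (A B : Matrix (Fin 2) (Fin 2) ℂ) :
    site k A * site l B = site l B * site k A := by
  rw [site_mul_diff k l hkl, site_mul_diff l k hkl.symm]
  ext x y
  simp only [Matrix.of_apply]
  apply Finset.prod_congr rfl
  intro j _
  by_cases hjk : j = k <;> by_cases hjl : j = l <;> simp [hjk, hjl] at * <;> aesop

lemma site_one (k : Fin N) : site k (1 : Matrix (Fin 2) (Fin 2) ℂ) = 1 := by
  ext x y
  simp only [site, Matrix.of_apply, Matrix.one_apply]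
  by_cases hxy : x = y
  · subst hxy; simp
  · rw [if_neg hxy]
    obtain ⟨j, hj⟩ : ∃ j, x j ≠ y j := by
      by_contra h; push_neg at h; exact hxy (funext h)
    apply Finset.prod_eq_zero (Finset.mem_univ j)
    by_cases hjk : j = k
    · subst hjk; simp [Matrix.one_apply, hj]
    · simp [hjk, hj]

lemma site_apply_decomp (k : Fin N) (M : Matrix (Fin 2) (Fin 2) ℂ) (x y : Spin N) :
    site k M x y = M (x k) (y k) *
      ∏ j ∈ Finset.univ.erase k, (if x j = y j then (1:ℂ) else 0) := by
  rw [site, Matrix.of_apply, ← Finset.mul_prod_erase _ _ (Finset.mem_univ k), if_pos rfl]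
  congr 1
  exact Finset.prod_congr rfl fun j hj => if_neg (Finset.ne_of_mem_erase hj)

lemma site_add (k : Fin N) (A B : Matrix (Fin 2) (Fin 2) ℂ) :
    site k (A + B) = site k A + site k B := by
  ext x y
  simp [site_apply_decomp, Matrix.add_apply, add_mul]

lemma site_smul (k : Fin N) (c : ℂ) (A : Matrix (Fin 2) (Fin 2) ℂ) :
    site k (c • A) = c • site k A := by
  ext x y
  simp [site_apply_decomp, Matrix.smul_apply, mul_assoc]

lemma site_sub (k : Fin N) (A B : Matrix (Fin 2) (Fin 2) ℂ) :
    site k (A - B) = site k A - site k B := by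
  ext x y
  simp [site_apply_decomp, Matrix.sub_apply, sub_mul]

lemma site_sp_conjT (b : Fin N) : (site b sp)ᴴ = site b sm := by
  ext x y
  rw [Matrix.conjTranspose_apply, site, site, Matrix.of_apply, Matrix.of_apply]
  rw [show (star : ℂ → ℂ) = (starRingEnd ℂ : ℂ → ℂ) from rfl, map_prod]
  apply Finset.prod_congr rfl
  intro j _
  by_cases hj : j = b
  · simp [hj, sp_entry]
  · simp only [if_neg hj]
    by_cases hxy : x j = y j
    · simp [hxy]
    · rw [if_neg hxy, if_neg (fun h => hxy h.symm), map_zero]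

/-! ### Commutation with the free Hamiltonian -/

lemma H0_comm_gen (b : Fin N) (M C : Matrix (Fin 2) (Fin 2) ℂ) (h : sz * M - M * sz = C) :
    (∑ k : Fin N, site k sz) * site b M - site b M * (∑ k : Fin N, site k sz) = site b C := by
  rw [Finset.sum_mul, Finset.mul_sum, ← Finset.sum_sub_distrib]
  rw [Finset.sum_eq_single b]
  · rw [site_mul_same, site_mul_same, ← site_sub, h]
  · intro k _ hk; rw [site_comm k b hk, sub_self]
  · simp

lemma comm_three (m k l : Fin N) (hmk : m ≠ k) (hml : m ≠ l)
    (A B C : Matrix (Fin 2) (Fin 2) ℂ) :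
    site m A * (site k B * site l C) = (site k B * site l C) * site m A := by
  rw [← mul_assoc, site_comm m k hmk, mul_assoc, site_comm m l hml, ← mul_assoc]

lemma hop_left (k l : Fin N) (hkl : k ≠ l) :
    site k sz * (site k sx * site l sx + site k sy * site l sy) +
      site l sz * (site k sx * site l sx + site k sy * site l sy) = 0 := by
  have h1 : site k sz * (site k sx * site l sx) = Complex.I • (site k sy * site l sx) := by
    rw [← mul_assoc, site_mul_same, szsx, site_smul, Matrix.smul_mul]
  have h2 : site k sz * (site k sy * site l sy) = (-Complex.I) • (site k sx * site l sy) := by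
    rw [← mul_assoc, site_mul_same, szsy, site_smul, Matrix.smul_mul]
  have h3 : site l sz * (site k sx * site l sx) = Complex.I • (site k sx * site l sy) := by
    rw [← mul_assoc, site_comm l k hkl.symm, mul_assoc, site_mul_same, szsx, site_smul,
      Matrix.mul_smul]
  have h4 : site l sz * (site k sy * site l sy) = (-Complex.I) • (site k sy * site l sx) := by
    rw [← mul_assoc, site_comm l k hkl.symm, mul_assoc, site_mul_same, szsy, site_smul,
      Matrix.mul_smul]
  rw [mul_add, mul_add, h1, h2, h3, h4]
  module

end AuxLemmas
section AuxLemmas2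
variable {N : ℕ}

lemma hop_right (k l : Fin N) (hkl : k ≠ l) :
    (site k sx * site l sx + site k sy * site l sy) * site k sz +
      (site k sx * site l sx + site k sy * site l sy) * site l sz = 0 := by
  have h1 : (site k sx * site l sx) * site k sz = (-Complex.I) • (site k sy * site l sx) := by
    rw [mul_assoc, site_comm l k hkl.symm, ← mul_assoc, site_mul_same, sxsz, site_smul,
      Matrix.smul_mul]
  have h2 : (site k sy * site l sy) * site k sz = Complex.I • (site k sx * site l sy) := by
    rw [mul_assoc, site_comm l k hkl.symm, ← mul_assoc, site_mul_same, sysz, site_smul,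
      Matrix.smul_mul]
  have h3 : (site k sx * site l sx) * site l sz = (-Complex.I) • (site k sx * site l sy) := by
    rw [mul_assoc, site_mul_same, sxsz, site_smul, Matrix.mul_smul]
  have h4 : (site k sy * site l sy) * site l sz = Complex.I • (site k sy * site l sx) := by
    rw [mul_assoc, site_mul_same, sysz, site_smul, Matrix.mul_smul]
  rw [add_mul, add_mul, h1, h2, h3, h4]
  module

lemma H0_comm_hop (k l : Fin N) (hkl : k ≠ l) :
    (∑ m : Fin N, site m sz) * (site k sx * site l sx + site k sy * site l sy) =
      (site k sx * site l sx + site k sy * site l sy) * (∑ m : Fin N, site m sz) := by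
  set T := site k sx * site l sx + site k sy * site l sy with hT
  rw [Finset.sum_mul, Finset.mul_sum]
  rw [← sub_eq_zero, ← Finset.sum_sub_distrib]
  have hvanish : ∀ m : Fin N, m ∉ ({k, l} : Finset (Fin N)) →
      site m sz * T - T * site m sz = 0 := by
    intro m hm
    simp only [Finset.mem_insert, Finset.mem_singleton, not_or] at hm
    have e1 : site m sz * (site k sx * site l sx) = (site k sx * site l sx) * site m sz :=
      comm_three m k l hm.1 hm.2 sz sx sx
    have e2 : site m sz * (site k sy * site l sy) = (site k sy * site l sy) * site m sz :=
      comm_three m k l hm.1 hm.2 sz sy sy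
    rw [hT, mul_add, add_mul, e1, e2, sub_self]
  rw [Finset.sum_subset (Finset.subset_univ ({k, l} : Finset (Fin N)))
    (fun m _ hm => hvanish m hm) |>.symm]
  rw [Finset.sum_pair hkl]
  have := hop_left k l hkl
  have := hop_right k l hkl
  rw [hT]
  calc (site k sz * (site k sx * site l sx + site k sy * site l sy) -
        (site k sx * site l sx + site k sy * site l sy) * site k sz) +
      (site l sz * (site k sx * site l sx + site k sy * site l sy) -
        (site k sx * site l sx + site k sy * site l sy) * site l sz)
      = (site k sz * (site k sx * site l sx + site k sy * site l sy) +
          site l sz * (site k sx * site l sx + site k sy * site l sy)) -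
        ((site k sx * site l sx + site k sy * site l sy) * site k sz +
          (site k sx * site l sx + site k sy * site l sy) * site l sz) := by abel
    _ = 0 := by rw [hop_left k l hkl, hop_right k l hkl, sub_self]

lemma H0_comm_HS : (∑ m : Fin N, site m sz) * HS N = HS N * (∑ m : Fin N, site m sz) := by
  rw [HS, mul_add, add_mul]
  congr 1
  rw [Finset.mul_sum, Finset.sum_mul]
  apply Finset.sum_congr rfl
  intro k _
  rw [Finset.mul_sum, Finset.sum_mul]
  apply Finset.sum_congr rfl
  intro l _
  by_cases h : (l : ℕ) = (k : ℕ) + 1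
  · rw [if_pos h]
    exact H0_comm_hop k l (fun he => by simp [he] at h)
  · rw [if_neg h, mul_zero, zero_mul]

end AuxLemmas2
section AuxLemmas3
variable {N : ℕ}

/-! ### rank-one matrices and traces -/

lemma mul_vecMulVec {n : Type*} [Fintype n] (A : Matrix n n ℂ) (u v : n → ℂ) :
    A * Matrix.vecMulVec u v = Matrix.vecMulVec (A.mulVec u) v := by
  ext x y
  simp [Matrix.vecMulVec_apply, Matrix.mul_apply, Matrix.mulVec, dotProduct,
    Finset.sum_mul, mul_assoc]

lemma vecMulVec_mul {n : Type*} [Fintype n] (u v : n → ℂ) (B : Matrix n n ℂ) :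
    Matrix.vecMulVec u v * B = Matrix.vecMulVec u (v ᵥ* B) := by
  ext x y
  simp [Matrix.vecMulVec_apply, Matrix.mul_apply, Matrix.vecMul, dotProduct,
    Finset.mul_sum, mul_assoc]

lemma vecMulVec_mul_vecMulVec {n : Type*} [Fintype n] (u v w z : n → ℂ) :
    Matrix.vecMulVec u v * Matrix.vecMulVec w z = (v ⬝ᵥ w) • Matrix.vecMulVec u z := by
  ext x y
  simp only [Matrix.vecMulVec_apply, Matrix.mul_apply, Matrix.smul_apply, dotProduct,
    Finset.sum_mul, smul_eq_mul, Finset.mul_sum]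
  exact Finset.sum_congr rfl fun i _ => by ring

lemma trace_vecMulVec {n : Type*} [Fintype n] (u v : n → ℂ) :
    (Matrix.vecMulVec u v).trace = v ⬝ᵥ u := by
  simp [Matrix.trace, Matrix.vecMulVec_apply, dotProduct, Matrix.diag, mul_comm]

lemma vecMulVec_smul_left {n : Type*} (c : ℂ) (u v : n → ℂ) :
    Matrix.vecMulVec (c • u) v = c • Matrix.vecMulVec u v := by
  ext x y; simp [Matrix.vecMulVec_apply, mul_assoc]

lemma vecMulVec_smul_right {n : Type*} (c : ℂ) (u v : n → ℂ) :
    Matrix.vecMulVec u (c • v) = c • Matrix.vecMulVec u v := by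
  ext x y; simp [Matrix.vecMulVec_apply]; ring

lemma dot_conj {n : Type*} [Fintype n] (A : Matrix n n ℂ) (u v : n → ℂ) :
    star v ⬝ᵥ (Aᴴ).mulVec u = starRingEnd ℂ (star u ⬝ᵥ A.mulVec v) := by
  rw [Matrix.dotProduct_mulVec, ← Matrix.star_mulVec]
  simp [dotProduct, Matrix.mulVec, map_sum, mul_comm]

/-- Completeness of an orthonormal family indexed by the same (finite) type. -/
lemma completeness {n : Type*} [Fintype n] [DecidableEq n] (Ψ : n → (n → ℂ))
    (hON : ∀ j m : n, star (Ψ j) ⬝ᵥ Ψ m = if j = m then 1 else 0) :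
    ∑ j : n, Matrix.vecMulVec (Ψ j) (star (Ψ j)) = 1 := by
  set U : Matrix n n ℂ := Matrix.of fun i j => Ψ j i with hU
  have hUU : Uᴴ * U = 1 := by
    ext j m
    simp only [Matrix.mul_apply, Matrix.conjTranspose_apply, hU, Matrix.of_apply,
      Matrix.one_apply]
    have := hON j m
    simpa [dotProduct] using this
  have hUU' : U * Uᴴ = 1 := mul_eq_one_comm.mp hUU
  ext i i'
  rw [Matrix.sum_apply]
  have : (1 : Matrix n n ℂ) i i' = (U * Uᴴ) i i' := by rw [hUU']
  rw [this, Matrix.mul_apply]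
  apply Finset.sum_congr rfl
  intro j _
  simp [Matrix.vecMulVec_apply, hU, Matrix.conjTranspose_apply]

/-- The master trace formula. -/
lemma traceKey {n : Type*} [Fintype n] [DecidableEq n] (Ψ : n → (n → ℂ))
    (A B : Matrix n n ℂ) (c d : n → ℂ) :
    (A * (∑ j : n, c j • Matrix.vecMulVec (Ψ j) (star (Ψ j))) * B *
        (∑ k : n, d k • Matrix.vecMulVec (Ψ k) (star (Ψ k)))).trace =
      ∑ j : n, ∑ k : n, c j * d k *
        ((star (Ψ k) ⬝ᵥ A.mulVec (Ψ j)) * (star (Ψ j) ⬝ᵥ B.mulVec (Ψ k))) := by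
  rw [Finset.mul_sum, Matrix.trace_sum, Finset.sum_comm]
  apply Finset.sum_congr rfl
  intro k _
  rw [Finset.mul_sum, Finset.sum_mul, Finset.sum_mul, Matrix.trace_sum]
  apply Finset.sum_congr rfl
  intro j _
  simp only [Matrix.mul_smul, Matrix.smul_mul, Matrix.trace_smul, smul_smul, smul_eq_mul]
  rw [_root_.mul_vecMulVec A (Ψ j), _root_.vecMulVec_mul, _root_.vecMulVec_mul_vecMulVec, Matrix.trace_smul,
    _root_.trace_vecMulVec, smul_eq_mul, ← Matrix.dotProduct_mulVec]
  ring

end AuxLemmas3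
section MainLemmas
variable {N : ℕ}

lemma trace_cyc {n : Type*} [Fintype n] (A B C : Matrix n n ℂ) :
    (A*(B*C)).trace = (B*(C*A)).trace := by
  rw [Matrix.trace_mul_comm, Matrix.mul_assoc]

lemma hb1_eq (β : ℝ) : b1 β = Real.exp (2*β) * b0 β := by
  have h : Real.exp (2*β) * Real.exp (-β) = Real.exp β := by
    rw [← Real.exp_add]; ring_nf
  rw [b0, b1, ← h, mul_div_assoc]

lemma diss_trace (b : Fin N) (β : ℝ) (c : ℂ)
    (ρ : Matrix (Spin N) (Spin N) ℂ) (hherm : ρ.IsHermitian)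
    (Ψ : Spin N → (Spin N → ℂ)) (r : Spin N → ℝ)
    (hON : ∀ j m : Spin N, star (Ψ j) ⬝ᵥ Ψ m = if j = m then 1 else 0)
    (heig : ∀ j : Spin N, ρ.mulVec (Ψ j) = ((r j : ℝ) : ℂ) • Ψ j) :
    (dissStarAt b β ρ *
        ((-(β : ℂ) • ∑ k : Fin N, site k sz - c • (1 : Matrix (Spin N) (Spin N) ℂ)) -
          ∑ j : Spin N, ((Real.log (r j) : ℝ) : ℂ) • Matrix.vecMulVec (Ψ j) (star (Ψ j)))).trace =
      (((4 * b0 β) * ∑ j : Spin N, ∑ k : Spin N,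
        (‖star (Ψ k) ⬝ᵥ (site b sp).mulVec (Ψ j)‖) ^ 2 *
          ((Real.exp (2 * β) * r k - r j) *
            (Real.log (r k) - Real.log (r j) + 2 * β)) : ℝ) : ℂ) := by
  classical
  set H0 : Matrix (Spin N) (Spin N) ℂ := ∑ k : Fin N, site k sz with hH0
  set P : Spin N → Matrix (Spin N) (Spin N) ℂ :=
    fun j => Matrix.vecMulVec (Ψ j) (star (Ψ j)) with hP
  set D : Matrix (Spin N) (Spin N) ℂ :=
    ∑ j : Spin N, ((Real.log (r j) : ℝ) : ℂ) • P j with hD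
  set L : Matrix (Spin N) (Spin N) ℂ := site b sp with hL
  set M : Matrix (Spin N) (Spin N) ℂ := site b sm with hM
  set W : Spin N → Spin N → ℂ := fun j k =>
    (star (Ψ k) ⬝ᵥ L.mulVec (Ψ j)) * (star (Ψ j) ⬝ᵥ M.mulVec (Ψ k)) with hWdef
  -- basic spectral facts
  have hsum : ∑ j : Spin N, P j = 1 := completeness Ψ hON
  have hρP : ∀ j, ρ * P j = ((r j : ℝ) : ℂ) • P j := by
    intro j; rw [hP]; simp only
    rw [_root_.mul_vecMulVec, heig j, vecMulVec_smul_left]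
  have hPρ : ∀ j, P j * ρ = ((r j : ℝ) : ℂ) • P j := by
    intro j
    have h1 : star (Ψ j) ᵥ* ρ = ((r j : ℝ) : ℂ) • star (Ψ j) := by
      calc star (Ψ j) ᵥ* ρ = star (Ψ j) ᵥ* ρᴴᴴ := by rw [Matrix.conjTranspose_conjTranspose]
        _ = star (ρᴴ *ᵥ Ψ j) := (Matrix.star_mulVec ρᴴ (Ψ j)).symm
        _ = star (ρ *ᵥ Ψ j) := by rw [hherm.eq]
        _ = star (((r j : ℝ) : ℂ) • Ψ j) := by rw [heig j]
        _ = ((r j : ℝ) : ℂ) • star (Ψ j) := by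
            rw [star_smul]; simp [Complex.star_def, Complex.conj_ofReal]
    rw [hP]; simp only
    rw [_root_.vecMulVec_mul, h1, vecMulVec_smul_right]
  have hρ : ρ = ∑ j : Spin N, ((r j : ℝ) : ℂ) • P j := by
    calc ρ = ρ * 1 := (mul_one ρ).symm
      _ = ρ * ∑ j, P j := by rw [hsum]
      _ = ∑ j, ρ * P j := Finset.mul_sum _ _ _
      _ = ∑ j, ((r j : ℝ) : ℂ) • P j := Finset.sum_congr rfl fun j _ => hρP j
  have hone : (1 : Matrix (Spin N) (Spin N) ℂ) = ∑ j : Spin N, (fun _ : Spin N => (1:ℂ)) j • P j := by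
    simp [hsum]
  have hρD : ρ * D = ∑ j : Spin N,
      (((Real.log (r j) : ℝ) : ℂ) * ((r j : ℝ) : ℂ)) • P j := by
    rw [hD, Finset.mul_sum]
    exact Finset.sum_congr rfl fun j _ => by
      rw [Matrix.mul_smul, hρP j, smul_smul, mul_comm]
  have hDρ : D * ρ = ∑ j : Spin N,
      (((Real.log (r j) : ℝ) : ℂ) * ((r j : ℝ) : ℂ)) • P j := by
    rw [hD, Finset.sum_mul]
    exact Finset.sum_congr rfl fun j _ => by
      rw [Matrix.smul_mul, hPρ j, smul_smul]
  -- operator algebra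
  have hML : M * L = site b nm := by rw [hM, hL, site_mul_same, smsp]
  have hLM : L * M = site b np := by rw [hM, hL, site_mul_same, spsm]
  have hLH0 : L * H0 = H0 * L - (2:ℂ) • L := by
    have h2 : H0 * L - L * H0 = (2:ℂ) • L := by
      have h := H0_comm_gen b sp ((2:ℂ) • sp) szsp
      rw [site_smul] at h
      rw [hH0, hL]; exact h
    have h3 := sub_eq_iff_eq_add.mp h2
    rw [h3]; module
  have hMH0 : M * H0 = H0 * M + (2:ℂ) • M := by
    have h2 : H0 * M - M * H0 = (-2:ℂ) • M := by
      have h := H0_comm_gen b sm ((-2:ℂ) • sm) szsm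
      rw [site_smul] at h
      rw [hH0, hM]; exact h
    have h3 := sub_eq_iff_eq_add.mp h2
    rw [h3]; module
  have hNmH0 : site b nm * H0 = H0 * site b nm := by
    have h2 : H0 * site b nm - site b nm * H0 = (0:ℂ) • site b nm := by
      have h := H0_comm_gen b nm ((0:ℂ) • nm) sznm
      rw [site_smul] at h
      rw [hH0]; exact h
    rw [zero_smul, sub_eq_zero] at h2
    exact h2.symm
  have hNpH0 : site b np * H0 = H0 * site b np := by
    have h2 : H0 * site b np - site b np * H0 = (0:ℂ) • site b np := by
      have h := H0_comm_gen b np ((0:ℂ) • np) sznp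
      rw [site_smul] at h
      rw [hH0]; exact h
    rw [zero_smul, sub_eq_zero] at h2
    exact h2.symm
  -- canonical sums
  have key : ∀ cc dd : Spin N → ℂ,
      (L * ((∑ j, cc j • P j) * (M * (∑ k, dd k • P k)))).trace =
        ∑ j, ∑ k, cc j * dd k * W j k := by
    intro cc dd
    have := traceKey Ψ L M cc dd
    simp only [Matrix.mul_assoc] at this
    simpa [hP, hWdef] using this
  have key2 : ∀ cc dd : Spin N → ℂ,
      (M * ((∑ j, cc j • P j) * (L * (∑ k, dd k • P k)))).trace =
        ∑ j, ∑ k, cc j * dd k * W k j := by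
    intro cc dd
    have := traceKey Ψ M L cc dd
    simp only [Matrix.mul_assoc] at this
    rw [hP, hWdef]
    simp only
    rw [this]
    exact Finset.sum_congr rfl fun j _ => Finset.sum_congr rfl fun k _ => by ring
  -- W is a nonnegative real
  have hWreal : ∀ j k : Spin N, W j k =
      (((‖star (Ψ k) ⬝ᵥ L.mulVec (Ψ j)‖) ^ 2 : ℝ) : ℂ) := by
    intro j k
    have hconj : star (Ψ j) ⬝ᵥ M.mulVec (Ψ k) =
        starRingEnd ℂ (star (Ψ k) ⬝ᵥ L.mulVec (Ψ j)) := by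
      rw [hM, hL, ← site_sp_conjT b]
      exact dot_conj (site b sp) (Ψ k) (Ψ j)
    simp only [hWdef]
    rw [hconj, Complex.mul_conj, Complex.sq_norm]
  -- canonical double-sum values
  have hγ1 : (L * (ρ * M)).trace = ∑ j, ∑ k, ((r j : ℝ) : ℂ) * 1 * W j k := by
    calc (L * (ρ * M)).trace = (L * (ρ * (M * 1))).trace := by rw [mul_one]
      _ = _ := by rw [hρ, hone]; exact key _ _
  have hδ1 : (L * (ρ * (M * D))).trace
      = ∑ j, ∑ k, ((r j : ℝ) : ℂ) * ((Real.log (r k) : ℝ) : ℂ) * W j k := by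
    rw [hρ, hD]; exact key _ _
  have hε1a : (L * ((ρ * D) * M)).trace
      = ∑ j, ∑ k, ((((Real.log (r j) : ℝ) : ℂ) * ((r j : ℝ) : ℂ)) * 1) * W j k := by
    calc (L * ((ρ * D) * M)).trace = (L * ((ρ * D) * (M * 1))).trace := by rw [mul_one]
      _ = _ := by rw [hρD, hone]; exact key _ _
  have hε1b : (L * ((D * ρ) * M)).trace
      = ∑ j, ∑ k, ((((Real.log (r j) : ℝ) : ℂ) * ((r j : ℝ) : ℂ)) * 1) * W j k := by
    calc (L * ((D * ρ) * M)).trace = (L * ((D * ρ) * (M * 1))).trace := by rw [mul_one]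
      _ = _ := by rw [hDρ, hone]; exact key _ _
  have hγ2 : (M * (ρ * L)).trace = ∑ j, ∑ k, ((r k : ℝ) : ℂ) * 1 * W j k := by
    calc (M * (ρ * L)).trace = (M * (ρ * (L * 1))).trace := by rw [mul_one]
      _ = ∑ j, ∑ k, ((r j : ℝ) : ℂ) * 1 * W k j := by rw [hρ, hone]; exact key2 _ _
      _ = _ := Finset.sum_comm
  have hδ2 : (M * (ρ * (L * D))).trace
      = ∑ j, ∑ k, ((r k : ℝ) : ℂ) * ((Real.log (r j) : ℝ) : ℂ) * W j k := by
    calc (M * (ρ * (L * D))).trace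
        = ∑ j, ∑ k, ((r j : ℝ) : ℂ) * ((Real.log (r k) : ℝ) : ℂ) * W k j := by
          rw [hρ, hD]; exact key2 _ _
      _ = _ := Finset.sum_comm
  have hε2a : (M * ((ρ * D) * L)).trace
      = ∑ j, ∑ k, ((((Real.log (r k) : ℝ) : ℂ) * ((r k : ℝ) : ℂ)) * 1) * W j k := by
    calc (M * ((ρ * D) * L)).trace = (M * ((ρ * D) * (L * 1))).trace := by rw [mul_one]
      _ = ∑ j, ∑ k, ((((Real.log (r j) : ℝ) : ℂ) * ((r j : ℝ) : ℂ)) * 1) * W k j := by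
          rw [hρD, hone]; exact key2 _ _
      _ = _ := Finset.sum_comm
  have hε2b : (M * ((D * ρ) * L)).trace
      = ∑ j, ∑ k, ((((Real.log (r k) : ℝ) : ℂ) * ((r k : ℝ) : ℂ)) * 1) * W j k := by
    calc (M * ((D * ρ) * L)).trace = (M * ((D * ρ) * (L * 1))).trace := by rw [mul_one]
      _ = ∑ j, ∑ k, ((((Real.log (r j) : ℝ) : ℂ) * ((r j : ℝ) : ℂ)) * 1) * W k j := by
          rw [hDρ, hone]; exact key2 _ _
      _ = _ := Finset.sum_comm
  -- reduce the H0 traces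
  have hA1 : (L * (ρ * (M * H0))).trace
      = (L * (ρ * (H0 * M))).trace + 2 * (L * (ρ * M)).trace := by
    rw [hMH0]
    simp only [mul_add, Matrix.mul_smul, Matrix.trace_add, Matrix.trace_smul, smul_eq_mul]
  have hA1' : (M * (ρ * (L * H0))).trace
      = (M * (ρ * (H0 * L))).trace - 2 * (M * (ρ * L)).trace := by
    rw [hLH0]
    simp only [mul_sub, Matrix.mul_smul, Matrix.trace_sub, Matrix.trace_smul, smul_eq_mul]
  have hNm1 : (site b nm * (ρ * H0)).trace = (L * (ρ * (H0 * M))).trace := by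
    rw [trace_cyc, ← hML, trace_cyc, Matrix.mul_assoc, trace_cyc, Matrix.mul_assoc,
      trace_cyc, Matrix.mul_assoc]
  have hNm2 : (site b nm * ρ).trace = (L * (ρ * M)).trace := by
    rw [← hML, Matrix.mul_assoc, trace_cyc]
  have hNm3 : (site b nm * (ρ * D)).trace = (L * ((ρ * D) * M)).trace := by
    rw [← hML, Matrix.mul_assoc, trace_cyc]
  have hNm4 : (ρ * (site b nm * H0)).trace = (L * (ρ * (H0 * M))).trace := by
    rw [hNmH0, ← hML, trace_cyc, Matrix.mul_assoc, trace_cyc, Matrix.mul_assoc,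
      trace_cyc, Matrix.mul_assoc]
  have hNm5 : (ρ * site b nm).trace = (L * (ρ * M)).trace := by
    rw [Matrix.trace_mul_comm]; exact hNm2
  have hNm6 : (ρ * (site b nm * D)).trace = (L * ((D * ρ) * M)).trace := by
    rw [← hML, Matrix.mul_assoc, trace_cyc, Matrix.mul_assoc, trace_cyc]
  have hNp1 : (site b np * (ρ * H0)).trace = (M * (ρ * (H0 * L))).trace := by
    rw [trace_cyc, ← hLM, trace_cyc, Matrix.mul_assoc, trace_cyc, Matrix.mul_assoc,
      trace_cyc, Matrix.mul_assoc]
  have hNp2 : (site b np * ρ).trace = (M * (ρ * L)).trace := by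
    rw [← hLM, Matrix.mul_assoc, trace_cyc]
  have hNp3 : (site b np * (ρ * D)).trace = (M * ((ρ * D) * L)).trace := by
    rw [← hLM, Matrix.mul_assoc, trace_cyc]
  have hNp4 : (ρ * (site b np * H0)).trace = (M * (ρ * (H0 * L))).trace := by
    rw [hNpH0, ← hLM, trace_cyc, Matrix.mul_assoc, trace_cyc, Matrix.mul_assoc,
      trace_cyc, Matrix.mul_assoc]
  have hNp5 : (ρ * site b np).trace = (M * (ρ * L)).trace := by
    rw [Matrix.trace_mul_comm]; exact hNp2
  have hNp6 : (ρ * (site b np * D)).trace = (M * ((D * ρ) * L)).trace := by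
    rw [← hLM, Matrix.mul_assoc, trace_cyc, Matrix.mul_assoc, trace_cyc]
  -- expand the dissipator and the observable
  have traceX : ∀ G : Matrix (Spin N) (Spin N) ℂ,
      (G * ((-(β : ℂ) • H0 - c • (1 : Matrix (Spin N) (Spin N) ℂ)) - D)).trace
        = -(β : ℂ) * (G * H0).trace - c * G.trace - (G * D).trace := by
    intro G
    rw [mul_sub, mul_sub, Matrix.mul_smul, Matrix.mul_smul, mul_one, Matrix.trace_sub,
      Matrix.trace_sub, Matrix.trace_smul, Matrix.trace_smul, smul_eq_mul, smul_eq_mul]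
  rw [dissStarAt, ← hL, ← hM]
  simp only [two_smul, add_mul, sub_mul, Matrix.smul_mul, Matrix.trace_add, Matrix.trace_sub,
    Matrix.trace_smul, smul_eq_mul]
  simp only [traceX]
  simp only [Matrix.mul_assoc]
  rw [hA1, hA1', hNm1, hNm2, hNm3, hNm4, hNm5, hNm6, hNp1, hNp2, hNp3, hNp4, hNp5, hNp6]
  rw [hγ1, hδ1, hε1a, hε1b, hγ2, hδ2, hε2a, hε2b]
  -- now a purely scalar computation
  calc _ = (-8 * (β : ℂ) * ((b0 β : ℝ) : ℂ)) * (∑ j, ∑ k, ((r j : ℝ) : ℂ) * 1 * W j k)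
        + (-4 * ((b0 β : ℝ) : ℂ)) *
            (∑ j, ∑ k, ((r j : ℝ) : ℂ) * ((Real.log (r k) : ℝ) : ℂ) * W j k)
        + (4 * ((b0 β : ℝ) : ℂ)) *
            (∑ j, ∑ k, ((((Real.log (r j) : ℝ) : ℂ) * ((r j : ℝ) : ℂ)) * 1) * W j k)
        + (8 * (β : ℂ) * ((b1 β : ℝ) : ℂ)) * (∑ j, ∑ k, ((r k : ℝ) : ℂ) * 1 * W j k)
        + (-4 * ((b1 β : ℝ) : ℂ)) *
            (∑ j, ∑ k, ((r k : ℝ) : ℂ) * ((Real.log (r j) : ℝ) : ℂ) * W j k)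
        + (4 * ((b1 β : ℝ) : ℂ)) *
            (∑ j, ∑ k, ((((Real.log (r k) : ℝ) : ℂ) * ((r k : ℝ) : ℂ)) * 1) * W j k) := by
          ring
    _ = ∑ j, ∑ k,
          ((-8 * (β : ℂ) * ((b0 β : ℝ) : ℂ)) * (((r j : ℝ) : ℂ) * 1 * W j k)
          + (-4 * ((b0 β : ℝ) : ℂ)) * (((r j : ℝ) : ℂ) * ((Real.log (r k) : ℝ) : ℂ) * W j k)
          + (4 * ((b0 β : ℝ) : ℂ)) * (((((Real.log (r j) : ℝ) : ℂ) * ((r j : ℝ) : ℂ)) * 1) * W j k)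
          + (8 * (β : ℂ) * ((b1 β : ℝ) : ℂ)) * (((r k : ℝ) : ℂ) * 1 * W j k)
          + (-4 * ((b1 β : ℝ) : ℂ)) * (((r k : ℝ) : ℂ) * ((Real.log (r j) : ℝ) : ℂ) * W j k)
          + (4 * ((b1 β : ℝ) : ℂ)) * (((((Real.log (r k) : ℝ) : ℂ) * ((r k : ℝ) : ℂ)) * 1) * W j k)) := by
          simp only [Finset.mul_sum, ← Finset.sum_add_distrib]
    _ = ∑ j, ∑ k, (((4 * b0 β) * ((‖star (Ψ k) ⬝ᵥ L.mulVec (Ψ j)‖) ^ 2 *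
          ((Real.exp (2 * β) * r k - r j) *
            (Real.log (r k) - Real.log (r j) + 2 * β))) : ℝ) : ℂ) := by
          refine Finset.sum_congr rfl fun j _ => Finset.sum_congr rfl fun k _ => ?_
          rw [hWreal j k, hb1_eq β]
          push_cast
          ring
    _ = _ := by
          rw [Finset.mul_sum]
          push_cast
          exact Finset.sum_congr rfl fun j _ => by
            rw [Finset.mul_sum]; push_cast
            exact Finset.sum_congr rfl fun k _ => by ring

end MainLemmas
section HamLemma
variable {N : ℕ}

lemma ham_trace (β : ℝ) (c : ℂ)
    (ρ : Matrix (Spin N) (Spin N) ℂ) (hherm : ρ.IsHermitian)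
    (Ψ : Spin N → (Spin N → ℂ)) (r : Spin N → ℝ)
    (heig : ∀ j : Spin N, ρ.mulVec (Ψ j) = ((r j : ℝ) : ℂ) • Ψ j) :
    ((HS N * ρ - ρ * HS N) *
        ((-(β : ℂ) • ∑ k : Fin N, site k sz - c • (1 : Matrix (Spin N) (Spin N) ℂ)) -
          ∑ j : Spin N, ((Real.log (r j) : ℝ) : ℂ) • Matrix.vecMulVec (Ψ j) (star (Ψ j)))).trace
      = 0 := by
  classical
  set H0 : Matrix (Spin N) (Spin N) ℂ := ∑ k : Fin N, site k sz with hH0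
  set P : Spin N → Matrix (Spin N) (Spin N) ℂ :=
    fun j => Matrix.vecMulVec (Ψ j) (star (Ψ j)) with hP
  set D : Matrix (Spin N) (Spin N) ℂ :=
    ∑ j : Spin N, ((Real.log (r j) : ℝ) : ℂ) • P j with hD
  have hρP : ∀ j, ρ * P j = ((r j : ℝ) : ℂ) • P j := by
    intro j; rw [hP]; simp only
    rw [_root_.mul_vecMulVec, heig j, vecMulVec_smul_left]
  have hPρ : ∀ j, P j * ρ = ((r j : ℝ) : ℂ) • P j := by
    intro j
    have h1 : star (Ψ j) ᵥ* ρ = ((r j : ℝ) : ℂ) • star (Ψ j) := by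
      calc star (Ψ j) ᵥ* ρ = star (Ψ j) ᵥ* ρᴴᴴ := by rw [Matrix.conjTranspose_conjTranspose]
        _ = star (ρᴴ *ᵥ Ψ j) := (Matrix.star_mulVec ρᴴ (Ψ j)).symm
        _ = star (ρ *ᵥ Ψ j) := by rw [hherm.eq]
        _ = star (((r j : ℝ) : ℂ) • Ψ j) := by rw [heig j]
        _ = ((r j : ℝ) : ℂ) • star (Ψ j) := by
            rw [star_smul]; simp [Complex.star_def, Complex.conj_ofReal]
    rw [hP]; simp only
    rw [_root_.vecMulVec_mul, h1, vecMulVec_smul_right]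
  have hcomm : ρ * D = D * ρ := by
    rw [hD, Finset.mul_sum, Finset.sum_mul]
    refine Finset.sum_congr rfl fun j _ => ?_
    rw [Matrix.mul_smul, Matrix.smul_mul, hρP j, hPρ j]
  have traceX : ∀ G : Matrix (Spin N) (Spin N) ℂ,
      (G * ((-(β : ℂ) • H0 - c • (1 : Matrix (Spin N) (Spin N) ℂ)) - D)).trace
        = -(β : ℂ) * (G * H0).trace - c * G.trace - (G * D).trace := by
    intro G
    rw [mul_sub, mul_sub, Matrix.mul_smul, Matrix.mul_smul, mul_one, Matrix.trace_sub,
      Matrix.trace_sub, Matrix.trace_smul, Matrix.trace_smul, smul_eq_mul, smul_eq_mul]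
  rw [sub_mul, Matrix.trace_sub, traceX, traceX]
  simp only [Matrix.mul_assoc]
  have h1 : (HS N * (ρ * H0)).trace = (ρ * (HS N * H0)).trace := by
    rw [trace_cyc, ← H0_comm_HS, hH0]
  have h2 : (HS N * ρ).trace = (ρ * HS N).trace := Matrix.trace_mul_comm _ _
  have h3 : (HS N * (ρ * D)).trace = (ρ * (HS N * D)).trace := by
    rw [show ρ * D = D * ρ from hcomm, ← Matrix.mul_assoc, trace_cyc, Matrix.mul_assoc]
  rw [h1, h2, h3]
  ring

end HamLemma
/-- Entropy production formula at equal temperatures: with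
`log ρ = Σ_j ln(ρ_j)|Ψ_j⟩⟨Ψ_j|` and `log ρ^β = −βH^{(S)} − ln Z`,
`σ(ρ) = Tr(L*(ρ)(log ρ^β − log ρ))
  = 4β₀ Σ_{j,k} (|⟨Ψ_k,σ₊^{(1)}Ψ_j⟩|² + |⟨Ψ_k,σ₊^{(N)}Ψ_j⟩|²)(e^{2β}ρ_k − ρ_j)(ln ρ_k − ln ρ_j + 2β)`. -/
theorem entropy_production_formula (N : ℕ) (hN : 2 ≤ N) (β : ℝ)
    (ρ : Matrix (Spin N) (Spin N) ℂ) (hpos : ρ.PosDef) (hherm : ρ.IsHermitian)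
    (htr : ρ.trace = 1)
    (Ψ : Spin N → (Spin N → ℂ)) (r : Spin N → ℝ)
    (hON : ∀ j m : Spin N, star (Ψ j) ⬝ᵥ Ψ m = if j = m then 1 else 0)
    (heig : ∀ j : Spin N, ρ.mulVec (Ψ j) = ((r j : ℝ) : ℂ) • Ψ j)
    (hrpos : ∀ j : Spin N, 0 < r j) :
    (LtwoStar (⟨0, by omega⟩ : Fin N) (⟨N - 1, by omega⟩ : Fin N) β β ρ *
        ((-(β : ℂ) • ∑ k : Fin N, site k sz -
            Complex.log ((NormedSpace.exp (-(β : ℂ) • ∑ k : Fin N, site k sz)).trace) •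
              (1 : Matrix (Spin N) (Spin N) ℂ)) -
          ∑ j : Spin N, ((Real.log (r j) : ℝ) : ℂ) • Matrix.vecMulVec (Ψ j) (star (Ψ j)))).trace =
      ((4 * b0 β) * ∑ j : Spin N, ∑ k : Spin N,
        ((‖star (Ψ k) ⬝ᵥ (site (⟨0, by omega⟩ : Fin N) sp).mulVec (Ψ j)‖) ^ 2 +
            (‖star (Ψ k) ⬝ᵥ (site (⟨N - 1, by omega⟩ : Fin N) sp).mulVec (Ψ j)‖) ^ 2) *
          ((Real.exp (2 * β) * r k - r j) * (Real.log (r k) - Real.log (r j) + 2 * β)) : ℝ) := by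

  classical
  rw [LtwoStar]
  rw [add_mul, add_mul, Matrix.trace_add, Matrix.trace_add, Matrix.smul_mul, Matrix.trace_smul]
  rw [ham_trace β
    (Complex.log ((NormedSpace.exp (-(β : ℂ) • ∑ k : Fin N, site k sz)).trace))
    ρ hherm Ψ r heig]
  rw [diss_trace (⟨0, by omega⟩ : Fin N) β
    (Complex.log ((NormedSpace.exp (-(β : ℂ) • ∑ k : Fin N, site k sz)).trace))
    ρ hherm Ψ r hON heig]
  rw [diss_trace (⟨N - 1, by omega⟩ : Fin N) β
    (Complex.log ((NormedSpace.exp (-(β : ℂ) • ∑ k : Fin N, site k sz)).trace))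
    ρ hherm Ψ r hON heig]
  rw [smul_zero, zero_add, ← Complex.ofReal_add]
  congr 1
  rw [← mul_add]
  congr 1
  rw [← Finset.sum_add_distrib]
  refine Finset.sum_congr rfl fun j _ => ?_
  rw [← Finset.sum_add_distrib]
  refine Finset.sum_congr rfl fun k _ => ?_
  ring
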